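/- Let k ≥ 1, let J be a finite index set, let Q̂ and W_j (j ∈ J) be real symmetric (k+1)×(k+1) matrices, and let W⁰ be the (k+1)×(k+1) matrix whose only nonzero entry is a 1 in position (k+1, k+1). Let ρ > 0. Suppose λ : J → ℝ with λ_j ≤ 0 for all j and ν ∈ ℝ satisfy Q̂ + Σ_{j∈J} λ_j W_j − ν W⁰ ⪯ 0 (i.e., the negative of this matrix is positive semidefinite). Suppose Ŷ is a symmetric positive semidefinite (k+1)×(k+1) matrix with Ŷ_{k+1,k+1} = 1 and ⟨W_j, Ŷ⟩ ≤ −2ρ² for all j ∈ J. Then 2ρ² Σ_{j∈J} λ_j ≥ ⟨Q̂, Ŷ⟩ − ν. (In the paper this is the content of the lemma bounding the sum of optimal dual multipliers of the Shor relaxation from below by (Φ_*(𝓕) − Φ̄(𝓕))/(2ρ_*²), instantiated with the constraint matrices W^{(i,j)} of the Shor dual and Ŷ = [[yyᵀ, y],[yᵀ, 1]] built from a Slater point y.) -/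

import Mathlib

open Matrix

noncomputable section

/-- Frobenius (trace) inner product of real matrices. -/
def frob {ι : Type} [Fintype ι] (A B : Matrix ι ι ℝ) : ℝ := (Aᵀ * B).trace

lemma psd_trace_nonneg {ι : Type} [Fintype ι] [DecidableEq ι]
    {M : Matrix ι ι ℝ} (hM : M.PosSemidef) : 0 ≤ M.trace := by
  rw [Matrix.trace]
  apply Finset.sum_nonneg
  intro i _
  exact hM.diag_nonneg

lemma frob_nonneg {ι : Type} [Fintype ι] [DecidableEq ι]
    {A B : Matrix ι ι ℝ} (hA : A.PosSemidef) (hB : B.PosSemidef) :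
    0 ≤ frob A B := by
  obtain ⟨C, hC⟩ : ∃ C : Matrix ι ι ℝ, A = Cᴴ * C := by
    open scoped MatrixOrder in
    simpa [Matrix.star_eq_conjTranspose] using CStarAlgebra.nonneg_iff_eq_star_mul_self.mp hA.nonneg
  have hAt : Aᵀ = A := by
    have := hA.1; simpa [Matrix.IsHermitian] using this
  rw [frob, hAt, hC]
  have : (Cᴴ * C * B).trace = (C * B * Cᴴ).trace := (Matrix.trace_mul_cycle C B Cᴴ).symm
  rw [this]
  exact psd_trace_nonneg (hB.mul_mul_conjTranspose_same C)

lemma frob_add {ι : Type} [Fintype ι] (A B C : Matrix ι ι ℝ) :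
    frob (A + B) C = frob A C + frob B C := by
  simp [frob, Matrix.transpose_add, Matrix.add_mul]

lemma frob_smul {ι : Type} [Fintype ι] (c : ℝ) (A B : Matrix ι ι ℝ) :
    frob (c • A) B = c * frob A B := by
  simp [frob, Matrix.transpose_smul, Matrix.smul_mul]

lemma frob_sum {ι : Type} [Fintype ι] {J : Type} [Fintype J]
    (A : J → Matrix ι ι ℝ) (B : Matrix ι ι ℝ) :
    frob (∑ j, A j) B = ∑ j, frob (A j) B := by
  simp [frob, Matrix.transpose_sum, Matrix.sum_mul, Matrix.trace_sum]

lemma frob_neg {ι : Type} [Fintype ι] (A B : Matrix ι ι ℝ) :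
    frob (-A) B = -frob A B := by
  simp [frob, Matrix.neg_mul]

lemma frob_sub {ι : Type} [Fintype ι] (A B C : Matrix ι ι ℝ) :
    frob (A - B) C = frob A C - frob B C := by
  simp [sub_eq_add_neg, frob_add, frob_neg]

lemma frob_stdBasis {ι : Type} [Fintype ι] [DecidableEq ι] (i : ι) (B : Matrix ι ι ℝ) :
    frob (Matrix.single i i 1) B = B i i := by
  simp [frob, Matrix.trace, Matrix.mul_apply, Matrix.single, Matrix.transpose_apply,
    ite_and, Finset.sum_ite_eq, Finset.sum_ite_eq']

/-- lower bound on the sum of dual multipliers from a dual feasible solution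
and a primal point whose constraint values are at most `−2ρ²`. -/
theorem dual_multiplier_sum_lower_bound (k : ℕ) (hk : 1 ≤ k)
    (J : Type) [Fintype J]
    (Qh : Matrix (Fin (k + 1)) (Fin (k + 1)) ℝ) (hQh : Qh.IsSymm)
    (W : J → Matrix (Fin (k + 1)) (Fin (k + 1)) ℝ) (hW : ∀ j, (W j).IsSymm)
    (ρ : ℝ) (hρ : 0 < ρ)
    (lam : J → ℝ) (hlam : ∀ j, lam j ≤ 0) (ν : ℝ)
    (hdual : (-(Qh + ∑ j, lam j • W j
        - ν • Matrix.single (Fin.last k) (Fin.last k) (1 : ℝ))).PosSemidef)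
    (Yh : Matrix (Fin (k + 1)) (Fin (k + 1)) ℝ) (hYpsd : Yh.PosSemidef)
    (hYcorner : Yh (Fin.last k) (Fin.last k) = 1)
    (hWY : ∀ j, frob (W j) Yh ≤ -(2 * ρ ^ 2)) :
    2 * ρ ^ 2 * ∑ j, lam j ≥ frob Qh Yh - ν := by
  have h0 := frob_nonneg hdual hYpsd
  rw [frob_neg, frob_sub, frob_add, frob_sum] at h0
  simp only [frob_smul] at h0
  rw [frob_stdBasis, hYcorner, mul_one] at h0
  have hsum : ∑ j, lam j * frob (W j) Yh ≥ ∑ j, lam j * (-(2 * ρ ^ 2)) := by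
    apply Finset.sum_le_sum
    intro j _
    exact mul_le_mul_of_nonpos_left (hWY j) (hlam j)
  have : ∑ j, lam j * (-(2 * ρ ^ 2)) = -(2 * ρ ^ 2 * ∑ j, lam j) := by
    rw [← Finset.sum_mul]; ring
  rw [this] at hsum
  linarith
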